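/- Let A be a finite-dimensional central simple algebra over a field k that is a unital subalgebra of a k-algebra B, and let C = C_B(A) be the centralizer of A in B. Then: (i) the multiplication map A ⊗_k C → B is an isomorphism of k-algebras; (ii) the map I ↦ A·I gives a bijective correspondence between two-sided ideals of C and two-sided ideals of B; (iii) Z(C) = Z(B), i.e. the center of C equals the center of B. -/

import Mathlib

open TensorProduct

set_option synthInstance.maxHeartbeats 800000
set_option maxHeartbeats 1600000
set_option linter.unnecessarySimpa false

section Psi

variable (k : Type*) [Field k] (A : Type*) [Ring A] [Algebra k A]

/-- Right multiplication as an algebra hom from the opposite algebra. -/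
noncomputable def rmulHom : Aᵐᵒᵖ →ₐ[k] Module.End k A where
  toFun a := LinearMap.mulRight k a.unop
  map_one' := by ext; simp
  map_mul' a b := by ext x; simp [mul_assoc]
  map_zero' := by ext; simp
  map_add' a b := by ext; simp [mul_add]
  commutes' r := by ext x; simp [Algebra.commutes, Algebra.smul_def]

/-- The sandwich map `A ⊗ Aᵐᵒᵖ →ₐ End k A`. -/
noncomputable def psi : A ⊗[k] Aᵐᵒᵖ →ₐ[k] Module.End k A :=
  Algebra.TensorProduct.lift (Algebra.lmul k A) (rmulHom k A) (by
    intro a b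
    show Commute (LinearMap.mulLeft k a) (LinearMap.mulRight k b.unop)
    exact LinearMap.commute_mulLeft_right a b.unop)

@[simp] lemma psi_tmul (a : A) (b : Aᵐᵒᵖ) (x : A) :
    psi k A (a ⊗ₜ b) x = a * x * b.unop := by
  simp [psi, Algebra.TensorProduct.lift_tmul, rmulHom, mul_assoc]

end Psi

section Simple

variable (k : Type*) [Field k] (A : Type*) [Ring A] [Algebra k A]

/-- `A` as a module over `A ⊗ Aᵐᵒᵖ`. -/
noncomputable local instance emod : Module (A ⊗[k] Aᵐᵒᵖ) A :=
  Module.compHom A (psi k A).toRingHom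

lemma esmul_def (u : A ⊗[k] Aᵐᵒᵖ) (x : A) : u • x = psi k A u x := rfl

lemma isSimpleModule_emod [IsSimpleRing A] : IsSimpleModule (A ⊗[k] Aᵐᵒᵖ) A := by
  haveI : Nontrivial A := inferInstance
  rw [isSimpleModule_iff]
  constructor
  intro P
  let J : TwoSidedIdeal A := TwoSidedIdeal.mk' (P : Set A)
    P.zero_mem (fun hx hy => P.add_mem hx hy)
    (fun {x} hx => P.neg_mem hx)
    (fun {x y} hy => by
      have : x * y = (x ⊗ₜ[k] (1 : Aᵐᵒᵖ)) • y := by simp [esmul_def]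
      rw [this]; exact P.smul_mem _ hy)
    (fun {x y} hx => by
      have : x * y = ((1 : A) ⊗ₜ[k] (MulOpposite.op y)) • x := by simp [esmul_def]
      rw [this]; exact P.smul_mem _ hx)
  rcases (IsSimpleRing.simple (R := A)).eq_bot_or_eq_top (a := J) with h | h
  · left
    ext x
    have : x ∈ J ↔ x ∈ P := TwoSidedIdeal.mem_mk' _ _ _ _ _ _ x
    simp only [h] at this
    simp [← this, TwoSidedIdeal.mem_bot]
  · right
    ext x
    have : x ∈ J ↔ x ∈ P := TwoSidedIdeal.mem_mk' _ _ _ _ _ _ x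
    simp only [h] at this
    simpa using this.mp (TwoSidedIdeal.mem_top A)

end Simple

section Density

variable (k : Type*) [Field k] (A : Type*) [Ring A] [Algebra k A]

noncomputable local instance : Module (A ⊗[k] Aᵐᵒᵖ) A := Module.compHom A (psi k A).toRingHom

lemma endE [Algebra.IsCentral k A] (g : A →ₗ[A ⊗[k] Aᵐᵒᵖ] A) :
    ∃ c : k, ∀ x : A, g x = c • x := by
  have hz : ∀ a : A, a * g 1 = g a := by
    intro a
    have := g.map_smul (a ⊗ₜ[k] (1 : Aᵐᵒᵖ)) 1
    simpa [esmul_def] using this.symm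
  have hz' : ∀ a : A, g 1 * a = g a := by
    intro a
    have := g.map_smul ((1 : A) ⊗ₜ[k] (MulOpposite.op a)) 1
    simpa [esmul_def] using this.symm
  have hc : g 1 ∈ Subalgebra.center k A :=
    Subalgebra.mem_center_iff.mpr (fun b => (hz b).trans (hz' b).symm)
  obtain ⟨c, hc⟩ := Algebra.mem_bot.mp (Algebra.IsCentral.out hc)
  refine ⟨c, fun x => ?_⟩
  rw [← hz' x] at *
  rw [← hc, Algebra.smul_def]

lemma psi_surjective [FiniteDimensional k A] [Algebra.IsCentral k A] [IsSimpleRing A] :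
    Function.Surjective (psi k A) := by
  classical
  intro φ
  set n := Module.finrank k A with hn
  set e : Module.Basis (Fin n) k A := Module.finBasis k A with he
  haveI hsimp : IsSimpleModule (A ⊗[k] Aᵐᵒᵖ) A := isSimpleModule_emod k A
  haveI hss : IsSemisimpleModule (A ⊗[k] Aᵐᵒᵖ) A := by
    have htop : IsSimpleModule (A ⊗[k] Aᵐᵒᵖ) (⊤ : Submodule (A ⊗[k] Aᵐᵒᵖ) A) :=
      IsSimpleModule.congr Submodule.topEquiv
    exact IsSemisimpleModule.of_sSup_simples_eq_top (le_antisymm le_top (le_sSup htop))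
  haveI hssN : IsSemisimpleModule (A ⊗[k] Aᵐᵒᵖ) (Fin n → A) := by
    refine isSemisimpleModule_of_isSemisimpleModule_submodule (s := (Set.univ : Set (Fin n)))
      (p := fun i => LinearMap.range (LinearMap.single (A ⊗[k] Aᵐᵒᵖ) (fun _ => A) i)) ?_ ?_
    · intro i _
      exact IsSemisimpleModule.range _
    · rw [eq_top_iff]
      rintro x -
      rw [← Finset.univ_sum_single x]
      exact Submodule.sum_mem _ fun i _ =>
        Submodule.mem_iSup_of_mem i (Submodule.mem_iSup_of_mem trivial ⟨x i, rfl⟩)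
  set xb : Fin n → A := fun i => e i with hxb
  set X : Submodule (A ⊗[k] Aᵐᵒᵖ) (Fin n → A) :=
    LinearMap.range (LinearMap.toSpanSingleton (A ⊗[k] Aᵐᵒᵖ) _ xb) with hX
  obtain ⟨Y, hY⟩ := exists_isCompl X
  set pr : (Fin n → A) →ₗ[A ⊗[k] Aᵐᵒᵖ] (Fin n → A) :=
    X.subtype.comp (Submodule.linearProjOfIsCompl X Y hY) with hpr
  have hprX : ∀ z : Fin n → A, pr z ∈ X := fun z => (Submodule.linearProjOfIsCompl X Y hY z).2
  have hpr1 : ∀ z ∈ X, pr z = z := by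
    intro z hz
    have := Submodule.linearProjOfIsCompl_apply_left hY ⟨z, hz⟩
    simp only [hpr, LinearMap.comp_apply, Submodule.coe_subtype]
    exact congrArg Subtype.val this
  have key : ∀ (g : (Fin n → A) →ₗ[A ⊗[k] Aᵐᵒᵖ] (Fin n → A)) (y : Fin n → A) (i : Fin n),
      φ (g y i) = g (fun j => φ (y j)) i := by
    intro g y i
    have hrep : ∀ z : Fin n → A,
        g z i = ∑ j, ((LinearMap.proj i).comp
          (g.comp (LinearMap.single (A ⊗[k] Aᵐᵒᵖ) (fun _ => A) j))) (z j) := by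
      intro z
      conv_lhs => rw [← Finset.univ_sum_single z]
      rw [map_sum]
      simp [Finset.sum_apply]
    rw [hrep y, hrep (fun j => φ (y j)), map_sum]
    refine Finset.sum_congr rfl fun j _ => ?_
    obtain ⟨c, hc⟩ := endE k A ((LinearMap.proj i).comp
      (g.comp (LinearMap.single (A ⊗[k] Aᵐᵒᵖ) (fun _ => A) j)))
    rw [hc, hc, map_smul]
  have hxbX : xb ∈ X := by
    rw [hX]
    exact ⟨1, by simp⟩
  have h2 : (fun i => φ (xb i)) ∈ X := by
    have heq : (fun i => φ (xb i)) = pr (fun i => φ (xb i)) := by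
      funext i
      conv_lhs => rw [← hpr1 xb hxbX]
      exact key pr xb i
    rw [heq]
    exact hprX _
  rw [hX] at h2
  obtain ⟨u, hu⟩ := h2
  refine ⟨u, ?_⟩
  refine e.ext fun i => ?_
  have := congrFun hu i
  simpa [LinearMap.toSpanSingleton, esmul_def] using this

end Density


theorem psi_bijective (k : Type*) [Field k] (A : Type*) [Ring A] [Algebra k A]
    [FiniteDimensional k A] [Algebra.IsCentral k A] [IsSimpleRing A] :
    Function.Bijective (psi k A) := by
  have hsurj := psi_surjective k A
  refine ⟨?_, hsurj⟩
  haveI : FiniteDimensional k Aᵐᵒᵖ :=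
    Module.Finite.equiv (MulOpposite.opLinearEquiv k (M := A))
  show Function.Injective (psi k A).toLinearMap
  apply (LinearMap.injective_iff_surjective_of_finrank_eq_finrank ?_).mpr hsurj
  rw [Module.finrank_tensorProduct, Module.finrank_linearMap]
  congr 1
  exact ((MulOpposite.opLinearEquiv k (M := A)).finrank_eq).symm

section Rho
variable (k : Type*) [Field k] (B : Type*) [Ring B] [Algebra k B] (A : Subalgebra k B)

noncomputable def rho : ↥A ⊗[k] (↥A)ᵐᵒᵖ →ₐ[k] Module.End k B :=
  Algebra.TensorProduct.lift ((Algebra.lmul k B).comp A.val)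
    ((rmulHom k B).comp (AlgHom.op A.val)) (by
      intro a b
      show Commute (LinearMap.mulLeft k (a : B)) (LinearMap.mulRight k (b.unop : B))
      exact LinearMap.commute_mulLeft_right _ _)

@[simp] lemma rho_tmul (a : ↥A) (b : (↥A)ᵐᵒᵖ) (x : B) :
    rho k B A (a ⊗ₜ b) x = (a : B) * x * ((b.unop : ↥A) : B) := by
  simp [rho, Algebra.TensorProduct.lift_tmul, rmulHom, Algebra.lmul, mul_assoc]

lemma rho_psi (u : ↥A ⊗[k] (↥A)ᵐᵒᵖ) (a : ↥A) :
    rho k B A u (a : B) = ((psi k ↥A u a : ↥A) : B) := by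
  induction u using TensorProduct.induction_on with
  | zero => simp
  | tmul x y => simp
  | add x y hx hy => simp [map_add, hx, hy]

lemma rho_rightC (u : ↥A ⊗[k] (↥A)ᵐᵒᵖ) (b : B) (c : B)
    (hc : c ∈ Subalgebra.centralizer k (A : Set B)) :
    rho k B A u (b * c) = rho k B A u b * c := by
  induction u using TensorProduct.induction_on with
  | zero => simp
  | tmul x y =>
    simp only [rho_tmul]
    have h := (Subalgebra.mem_centralizer_iff k).mp hc ((y.unop : ↥A) : B) (y.unop).2
    rw [show (x : B) * (b * c) * ((y.unop : ↥A) : B)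
        = (x : B) * b * (c * ((y.unop : ↥A) : B)) from by simp [mul_assoc], ← h]
    simp [mul_assoc]
  | add x y hx hy => simp [map_add, hx, hy, add_mul]

lemma rho_ideal (u : ↥A ⊗[k] (↥A)ᵐᵒᵖ) (J : TwoSidedIdeal B) (b : B) (hb : b ∈ J) :
    rho k B A u b ∈ J := by
  induction u using TensorProduct.induction_on with
  | zero => simpa using J.zero_mem
  | tmul x y =>
    simp only [rho_tmul]
    exact J.mul_mem_right _ _ (J.mul_mem_left _ _ hb)
  | add x y hx hy => simpa [map_add] using J.add_mem hx hy

end Rho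

lemma span_rep (k : Type*) [Field k] (B : Type*) [Ring B] [Algebra k B] (A : Subalgebra k B)
    {ι : Type*} [Fintype ι] (e : Module.Basis ι k ↥A) (π : ι → Module.End k B)
    (P1 : ∀ i (a : ↥A), π i (a : B) = e.coord i a • (1 : B))
    (P2 : ∀ i (b : B), π i b ∈ Subalgebra.centralizer k (A : Set B))
    (P3 : ∀ b : B, ∑ i, ((e i : ↥A) : B) * π i b = b)
    (P4 : ∀ i (b c : B), c ∈ Subalgebra.centralizer k (A : Set B) → π i (b * c) = π i b * c)
    (I : TwoSidedIdeal ↥(Subalgebra.centralizer k (A : Set B))) : ∀ b : B,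
    b ∈ TwoSidedIdeal.span {b : B | ∃ a ∈ A, ∃ c ∈ I,
        b = a * ((c : Subalgebra.centralizer k (A : Set B)) : B)} ↔
    ∃ cf : ι → ↥(Subalgebra.centralizer k (A : Set B)), (∀ i, cf i ∈ I) ∧
      b = ∑ i, ((e i : ↥A) : B) * ((cf i : B)) := by
  classical
  -- the representation set is a two-sided ideal
  have hzero : ∃ cf : ι → ↥(Subalgebra.centralizer k (A : Set B)), (∀ i, cf i ∈ I) ∧
      (0 : B) = ∑ i, ((e i : ↥A) : B) * ((cf i : B)) :=
    ⟨fun _ => 0, fun _ => I.zero_mem, by simp⟩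
  have hadd : ∀ {x y : B},
      (∃ cf : ι → ↥(Subalgebra.centralizer k (A : Set B)), (∀ i, cf i ∈ I) ∧
        x = ∑ i, ((e i : ↥A) : B) * ((cf i : B))) →
      (∃ cf : ι → ↥(Subalgebra.centralizer k (A : Set B)), (∀ i, cf i ∈ I) ∧
        y = ∑ i, ((e i : ↥A) : B) * ((cf i : B))) →
      (∃ cf : ι → ↥(Subalgebra.centralizer k (A : Set B)), (∀ i, cf i ∈ I) ∧
        x + y = ∑ i, ((e i : ↥A) : B) * ((cf i : B))) := by
    rintro x y ⟨cf, hcf, rfl⟩ ⟨cf', hcf', rfl⟩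
    refine ⟨cf + cf', fun i => I.add_mem (hcf i) (hcf' i), ?_⟩
    rw [← Finset.sum_add_distrib]
    refine Finset.sum_congr rfl fun i _ => ?_
    simp [mul_add]

  have hneg : ∀ {x : B},
      (∃ cf : ι → ↥(Subalgebra.centralizer k (A : Set B)), (∀ i, cf i ∈ I) ∧
        x = ∑ i, ((e i : ↥A) : B) * ((cf i : B))) →
      (∃ cf : ι → ↥(Subalgebra.centralizer k (A : Set B)), (∀ i, cf i ∈ I) ∧
        -x = ∑ i, ((e i : ↥A) : B) * ((cf i : B))) := by
    rintro x ⟨cf, hcf, rfl⟩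
    refine ⟨-cf, fun i => I.neg_mem (hcf i), ?_⟩
    rw [← Finset.sum_neg_distrib]
    refine Finset.sum_congr rfl fun i _ => ?_
    simp [mul_neg]
  have hmulleft : ∀ {x y : B},
      (∃ cf : ι → ↥(Subalgebra.centralizer k (A : Set B)), (∀ i, cf i ∈ I) ∧
        y = ∑ i, ((e i : ↥A) : B) * ((cf i : B))) →
      (∃ cf : ι → ↥(Subalgebra.centralizer k (A : Set B)), (∀ i, cf i ∈ I) ∧
        x * y = ∑ i, ((e i : ↥A) : B) * ((cf i : B))) := by
    rintro x y ⟨cf, hcf, rfl⟩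
    refine ⟨fun j => ∑ i, (⟨π j (x * ((e i : ↥A) : B)), P2 j _⟩ :
        ↥(Subalgebra.centralizer k (A : Set B))) * cf i,
      fun j => sum_mem fun i _ => I.mul_mem_left _ _ (hcf i), ?_⟩
    rw [Finset.mul_sum]
    have hcoe : ∀ j, ((∑ i, (⟨π j (x * ((e i : ↥A) : B)), P2 j _⟩ :
        ↥(Subalgebra.centralizer k (A : Set B))) * cf i : ↥(Subalgebra.centralizer k (A : Set B))) : B)
        = ∑ i, π j (x * ((e i : ↥A) : B)) * ((cf i : B)) := by
      intro j
      push_cast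
      rfl
    calc ∑ i, x * (((e i : ↥A) : B) * ((cf i : B)))
        = ∑ i, (x * ((e i : ↥A) : B)) * ((cf i : B)) := by
          refine Finset.sum_congr rfl fun i _ => by noncomm_ring
      _ = ∑ i, (∑ j, ((e j : ↥A) : B) * π j (x * ((e i : ↥A) : B))) * ((cf i : B)) := by
          refine Finset.sum_congr rfl fun i _ => by rw [P3]
      _ = ∑ i, ∑ j, ((e j : ↥A) : B) * (π j (x * ((e i : ↥A) : B)) * ((cf i : B))) := by
          refine Finset.sum_congr rfl fun i _ => by
            rw [Finset.sum_mul]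
            exact Finset.sum_congr rfl fun j _ => by noncomm_ring
      _ = ∑ j, ∑ i, ((e j : ↥A) : B) * (π j (x * ((e i : ↥A) : B)) * ((cf i : B))) :=
          Finset.sum_comm
      _ = ∑ j, ((e j : ↥A) : B) * ((∑ i, (⟨π j (x * ((e i : ↥A) : B)), P2 j _⟩ :
            ↥(Subalgebra.centralizer k (A : Set B))) * cf i :
            ↥(Subalgebra.centralizer k (A : Set B))) : B) := by
          refine Finset.sum_congr rfl fun j _ => ?_
          rw [hcoe j, Finset.mul_sum]
  have hmulright : ∀ {x y : B},
      (∃ cf : ι → ↥(Subalgebra.centralizer k (A : Set B)), (∀ i, cf i ∈ I) ∧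
        x = ∑ i, ((e i : ↥A) : B) * ((cf i : B))) →
      (∃ cf : ι → ↥(Subalgebra.centralizer k (A : Set B)), (∀ i, cf i ∈ I) ∧
        x * y = ∑ i, ((e i : ↥A) : B) * ((cf i : B))) := by
    rintro x y ⟨cf, hcf, rfl⟩
    refine ⟨fun l => ∑ i, ∑ j, e.repr ((e i) * (e j)) l •
        (cf i * (⟨π j y, P2 j y⟩ : ↥(Subalgebra.centralizer k (A : Set B)))),
      fun l => sum_mem fun i _ => sum_mem fun j _ => by
        rw [Algebra.smul_def]
        exact I.mul_mem_left _ _ (I.mul_mem_right _ _ (hcf i)), ?_⟩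
    have hcoe : ∀ l, ((∑ i, ∑ j, e.repr ((e i) * (e j)) l •
        (cf i * (⟨π j y, P2 j y⟩ : ↥(Subalgebra.centralizer k (A : Set B)))) :
          ↥(Subalgebra.centralizer k (A : Set B))) : B)
        = ∑ i, ∑ j, e.repr ((e i) * (e j)) l • (((cf i : B)) * π j y) := by
      intro l
      push_cast
      rfl
    calc (∑ i, ((e i : ↥A) : B) * ((cf i : B))) * y
        = ∑ i, ((e i : ↥A) : B) * ((cf i : B)) * y := by rw [Finset.sum_mul]
      _ = ∑ i, ∑ j, ((e i : ↥A) : B) * ((cf i : B)) * (((e j : ↥A) : B) * π j y) := by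
          refine Finset.sum_congr rfl fun i _ => ?_
          conv_lhs => rw [← P3 y]
          rw [Finset.mul_sum]
      _ = ∑ i, ∑ j, (((e i : ↥A) : B) * ((e j : ↥A) : B)) * (((cf i : B)) * π j y) := by
          refine Finset.sum_congr rfl fun i _ => Finset.sum_congr rfl fun j _ => ?_
          have hcomm : ((cf i : B)) * ((e j : ↥A) : B) = ((e j : ↥A) : B) * ((cf i : B)) :=
            ((Subalgebra.mem_centralizer_iff k).mp (cf i).2 _ (e j).2).symm
          calc ((e i : ↥A) : B) * ((cf i : B)) * (((e j : ↥A) : B) * π j y)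
              = ((e i : ↥A) : B) * ((((cf i : B)) * ((e j : ↥A) : B)) * π j y) := by
                noncomm_ring
            _ = ((e i : ↥A) : B) * ((((e j : ↥A) : B) * ((cf i : B))) * π j y) := by rw [hcomm]
            _ = (((e i : ↥A) : B) * ((e j : ↥A) : B)) * (((cf i : B)) * π j y) := by
                noncomm_ring
      _ = ∑ i, ∑ j, ∑ l, e.repr ((e i) * (e j)) l •
            (((e l : ↥A) : B) * (((cf i : B)) * π j y)) := by
          refine Finset.sum_congr rfl fun i _ => Finset.sum_congr rfl fun j _ => ?_
          have h1 : ((e i : ↥A) : B) * ((e j : ↥A) : B) = (((e i) * (e j) : ↥A) : B) := by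
            push_cast; rfl
          have h2 : (((e i) * (e j) : ↥A) : B)
              = ∑ l, e.repr ((e i) * (e j)) l • ((e l : ↥A) : B) := by
            conv_lhs => rw [← e.sum_repr ((e i) * (e j))]
            push_cast
            rfl
          rw [h1, h2, Finset.sum_mul]
          exact Finset.sum_congr rfl fun l _ => by rw [smul_mul_assoc]
      _ = ∑ l, ((e l : ↥A) : B) * ((∑ i, ∑ j, e.repr ((e i) * (e j)) l •
            (cf i * (⟨π j y, P2 j y⟩ : ↥(Subalgebra.centralizer k (A : Set B)))) :
            ↥(Subalgebra.centralizer k (A : Set B))) : B) := by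
          calc ∑ i, ∑ j, ∑ l, e.repr ((e i) * (e j)) l •
                (((e l : ↥A) : B) * (((cf i : B)) * π j y))
              = ∑ i, ∑ l, ∑ j, e.repr ((e i) * (e j)) l •
                (((e l : ↥A) : B) * (((cf i : B)) * π j y)) :=
                Finset.sum_congr rfl fun i _ => Finset.sum_comm
            _ = ∑ l, ∑ i, ∑ j, e.repr ((e i) * (e j)) l •
                (((e l : ↥A) : B) * (((cf i : B)) * π j y)) := Finset.sum_comm
            _ = ∑ l, ((e l : ↥A) : B) * ∑ i, ∑ j, e.repr ((e i) * (e j)) l •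
                (((cf i : B)) * π j y) := by
                refine Finset.sum_congr rfl fun l _ => ?_
                simp only [Finset.mul_sum, mul_smul_comm]
            _ = ∑ l, ((e l : ↥A) : B) * ((∑ i, ∑ j, e.repr ((e i) * (e j)) l •
                (cf i * (⟨π j y, P2 j y⟩ : ↥(Subalgebra.centralizer k (A : Set B)))) :
                ↥(Subalgebra.centralizer k (A : Set B))) : B) :=
                Finset.sum_congr rfl fun l _ => by rw [hcoe l]
  intro b
  constructor
  · intro hb
    have hmem := TwoSidedIdeal.mem_span_iff.mp hb
      (TwoSidedIdeal.mk' {b : B | ∃ cf : ι → ↥(Subalgebra.centralizer k (A : Set B)),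
        (∀ i, cf i ∈ I) ∧ b = ∑ i, ((e i : ↥A) : B) * ((cf i : B))}
        hzero hadd hneg hmulleft hmulright) ?_
    · rwa [TwoSidedIdeal.mem_mk'] at hmem
    rintro z ⟨a, ha, c, hc, rfl⟩
    rw [SetLike.mem_coe, TwoSidedIdeal.mem_mk']
    refine ⟨fun i => e.coord i ⟨a, ha⟩ • c, fun i => by
      show e.coord i ⟨a, ha⟩ • c ∈ I
      rw [Algebra.smul_def]; exact I.mul_mem_left _ _ hc, ?_⟩
    calc a * ((c : Subalgebra.centralizer k (A : Set B)) : B)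
        = ((((⟨a, ha⟩ : ↥A)) : B)) * ((c : Subalgebra.centralizer k (A : Set B)) : B) := rfl
      _ = (((∑ i, e.coord i ⟨a, ha⟩ • e i : ↥A)) : B) *
            ((c : Subalgebra.centralizer k (A : Set B)) : B) := by
          congr 2
          simpa [Module.Basis.coord_apply] using (e.sum_repr ⟨a, ha⟩).symm
      _ = ∑ i, ((e i : ↥A) : B) * (((e.coord i ⟨a, ha⟩ • c :
            ↥(Subalgebra.centralizer k (A : Set B)))) : B) := by
          rw [show (((∑ i, e.coord i ⟨a, ha⟩ • e i : ↥A)) : B)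
              = ∑ i, e.coord i ⟨a, ha⟩ • ((e i : ↥A) : B) from by push_cast; rfl]
          rw [Finset.sum_mul]
          refine Finset.sum_congr rfl fun i _ => ?_
          push_cast
          rw [smul_mul_assoc, mul_smul_comm]
  · rintro ⟨cf, hcf, rfl⟩
    exact sum_mem fun i _ =>
      TwoSidedIdeal.subset_span ⟨((e i : ↥A) : B), (e i).2, cf i, hcf i, rfl⟩


/-- Let `A` be a finite-dimensional central simple subalgebra of a `k`-algebra `B` and
let `C = C_B(A)` be its centralizer. Then (i) the multiplication map `A ⊗[k] C → B` is
an isomorphism of `k`-algebras, (ii) `I ↦ A·I` is a bijection between two-sided ideals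
of `C` and two-sided ideals of `B`, and (iii) `Z(C) = Z(B)`. -/
theorem centralizer_of_csa_subalgebra
    (k : Type*) [Field k] (B : Type*) [Ring B] [Algebra k B]
    (A : Subalgebra k B)
    [FiniteDimensional k A] [Algebra.IsCentral k A] [IsSimpleRing A] :
    Function.Bijective
      (Algebra.TensorProduct.lift A.val (Subalgebra.centralizer k (A : Set B)).val
        (fun a c => (Subalgebra.mem_centralizer_iff k |>.mp c.2 a a.2))) ∧
    Function.Bijective
      (fun I : TwoSidedIdeal (Subalgebra.centralizer k (A : Set B)) =>
        TwoSidedIdeal.span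
          {b : B | ∃ a ∈ A, ∃ c ∈ I, b = a * ((c : Subalgebra.centralizer k (A : Set B)) : B)}) ∧
    Subalgebra.map (Subalgebra.centralizer k (A : Set B)).val
        (Subalgebra.center k (Subalgebra.centralizer k (A : Set B))) =
      Subalgebra.center k B := by
  classical
  have hone : (1 : ↥A) ≠ 0 := one_ne_zero
  have hli : LinearIndepOn k id ({1} : Set ↥A) :=
    LinearIndepOn.singleton (v := id) hone
  set e : Module.Basis ↥(hli.extend (Set.subset_univ _)) k ↥A := Module.Basis.extend hli with he
  haveI : Fintype ↥(hli.extend (Set.subset_univ _)) := IsNoetherian.fintypeBasisIndex e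
  set i0 : ↥(hli.extend (Set.subset_univ _)) := ⟨1, hli.subset_extend _ rfl⟩ with hi0def
  have hi0 : e i0 = 1 := Module.Basis.extend_apply_self hli i0
  have hpsi := psi_bijective k ↥A
  set cmap : ↥(hli.extend (Set.subset_univ _)) → Module.End k ↥A :=
    fun i => (e.coord i).smulRight 1 with hcmap
  set u : ↥(hli.extend (Set.subset_univ _)) → ↥A ⊗[k] (↥A)ᵐᵒᵖ :=
    fun i => Function.surjInv hpsi.2 (cmap i) with hudef
  have hu : ∀ i, psi k ↥A (u i) = cmap i := fun i => Function.surjInv_eq hpsi.2 _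
  set π : ↥(hli.extend (Set.subset_univ _)) → Module.End k B :=
    fun i => rho k B A (u i) with hπdef
  have P1 : ∀ i (a : ↥A), π i (a : B) = e.coord i a • (1 : B) := by
    intro i a
    rw [show π i (a : B) = rho k B A (u i) (a : B) from rfl, rho_psi, hu]
    simp [hcmap]
  have P2 : ∀ i (b : B), π i b ∈ Subalgebra.centralizer k (A : Set B) := by
    intro i b
    rw [Subalgebra.mem_centralizer_iff]
    rintro g hg
    set a : ↥A := ⟨g, hg⟩ with ha
    have hswap : (a ⊗ₜ[k] (1 : (↥A)ᵐᵒᵖ)) * u i = ((1 : ↥A) ⊗ₜ[k] MulOpposite.op a) * u i := by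
      apply hpsi.1
      rw [map_mul, map_mul]
      ext x
      simp [Module.End.mul_apply, hu, hcmap, smul_mul_assoc, mul_smul_comm]
    have h1 : g * π i b = rho k B A ((a ⊗ₜ[k] (1 : (↥A)ᵐᵒᵖ)) * (u i)) b := by
      rw [map_mul]
      simp [Module.End.mul_apply, hπdef, ha]
    have h2 : π i b * g = rho k B A (((1 : ↥A) ⊗ₜ[k] MulOpposite.op a) * (u i)) b := by
      rw [map_mul]
      simp [Module.End.mul_apply, hπdef, ha]
    rw [h1, hswap, ← h2]
  have P3 : ∀ b : B, ∑ i, ((e i : ↥A) : B) * π i b = b := by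
    intro b
    have hv : (∑ i, ((e i) ⊗ₜ[k] (1 : (↥A)ᵐᵒᵖ)) * u i) = 1 := by
      apply hpsi.1
      rw [map_sum, map_one]
      ext x
      simp only [LinearMap.sum_apply, Module.End.mul_apply, map_mul, hu, hcmap,
        LinearMap.coe_smulRight, Module.End.one_apply, psi_tmul, MulOpposite.unop_one, mul_one]
      simp only [LinearMap.smulRight_apply, mul_smul_comm, mul_one, Module.Basis.coord_apply]
      exact congrArg _ (e.sum_repr x)
    have := congrArg (fun w => rho k B A w b) hv
    simp only [map_sum, map_one, LinearMap.sum_apply, Module.End.mul_apply, map_mul,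
      Module.End.one_apply, rho_tmul, MulOpposite.unop_one, OneMemClass.coe_one, mul_one] at this
    simpa [hπdef] using this
  have P4 : ∀ i (b c : B), c ∈ Subalgebra.centralizer k (A : Set B) →
      π i (b * c) = π i b * c := fun i b c hc => rho_rightC k B A (u i) b c hc
  have P5 : ∀ i (c : B), c ∈ Subalgebra.centralizer k (A : Set B) →
      π i c = e.coord i 1 • c := by
    intro i c hc
    have : π i c = π i ((1 : B) * c) := by rw [one_mul]
    rw [this, P4 i 1 c hc, show (1 : B) = ((1 : ↥A) : B) from rfl, P1]
    rw [smul_mul_assoc, one_mul]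
  have P6 : ∀ i (J : TwoSidedIdeal B) (b : B), b ∈ J → π i b ∈ J :=
    fun i J b hb => rho_ideal k B A (u i) J b hb
  refine ⟨?_, ?_, ?_⟩
  · -- part (i)
    rw [Function.bijective_iff_has_inverse]
    set g : B → ↥A ⊗[k] ↥(Subalgebra.centralizer k (A : Set B)) := fun b => ∑ i, (e i) ⊗ₜ[k]
      (⟨π i b, P2 i b⟩ : ↥(Subalgebra.centralizer k (A : Set B))) with hgdef
    have hgadd : ∀ b b' : B, g (b + b') = g b + g b' := by
      intro b b'
      rw [hgdef]
      simp only
      rw [← Finset.sum_add_distrib]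
      refine Finset.sum_congr rfl fun i _ => ?_
      rw [← tmul_add]
      congr 1
      ext
      simp
    have hgzero : g 0 = 0 := by
      rw [hgdef]
      simp only
      refine Finset.sum_eq_zero fun i _ => ?_
      have : (⟨π i (0 : B), P2 i 0⟩ : ↥(Subalgebra.centralizer k (A : Set B))) = 0 := by
        ext
        simp
      rw [this, tmul_zero]
    refine ⟨g, ?_, ?_⟩
    · intro x
      induction x using TensorProduct.induction_on with
      | zero => simpa using hgzero
      | tmul a c =>
        have hfac : Algebra.TensorProduct.lift A.val (Subalgebra.centralizer k (A : Set B)).val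
            (fun a c => (Subalgebra.mem_centralizer_iff k |>.mp c.2 a a.2)) (a ⊗ₜ[k] c)
            = (a : B) * (c : B) := by
          exact Algebra.TensorProduct.lift_tmul ..
        rw [hfac, hgdef]
        simp only
        have hπ : ∀ i, π i ((a : B) * (c : B)) = e.coord i a • (c : B) := by
          intro i
          rw [P4 i (a : B) (c : B) c.2, P1, smul_mul_assoc, one_mul]
        have hsub : ∀ i, (⟨π i ((a : B) * (c : B)), P2 i _⟩ :
            ↥(Subalgebra.centralizer k (A : Set B))) = e.coord i a • c := by
          intro i
          ext
          simp [hπ i]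
        calc ∑ i, (e i) ⊗ₜ[k] (⟨π i ((a : B) * (c : B)), P2 i _⟩ :
            ↥(Subalgebra.centralizer k (A : Set B)))
            = ∑ i, (e i) ⊗ₜ[k] (e.coord i a • c) := by
              exact Finset.sum_congr rfl fun i _ => by rw [hsub i]
          _ = ∑ i, (e.coord i a • e i) ⊗ₜ[k] c := by
              simp only [tmul_smul, smul_tmul']
          _ = (∑ i, e.coord i a • e i) ⊗ₜ[k] c := by rw [TensorProduct.sum_tmul]
          _ = a ⊗ₜ[k] c := by
              congr 1
              simpa [Module.Basis.coord_apply] using e.sum_repr a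
      | add x y hx hy =>
        rw [map_add, hgadd, hx, hy]
    · intro b
      rw [hgdef]
      simp only [map_sum]
      exact (Finset.sum_congr rfl fun i _ => Algebra.TensorProduct.lift_tmul ..).trans (P3 b)
  · -- part (ii)
    rw [Function.bijective_iff_has_inverse]
    refine ⟨fun J => TwoSidedIdeal.mk'
        {c : ↥(Subalgebra.centralizer k (A : Set B)) | (c : B) ∈ J}
        (by simpa using J.zero_mem)
        (fun {x y} hx hy => by simpa using J.add_mem hx hy)
        (fun {x} hx => by simpa using J.neg_mem hx)
        (fun {x y} hy => by simpa using J.mul_mem_left _ _ hy)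
        (fun {x y} hx => by simpa using J.mul_mem_right _ _ hx), ?_, ?_⟩
    · -- left inverse
      intro I
      have hrep : ∀ b : B,
          b ∈ TwoSidedIdeal.span {b : B | ∃ a ∈ A, ∃ c ∈ I,
              b = a * ((c : Subalgebra.centralizer k (A : Set B)) : B)} ↔
          ∃ cf : _ → ↥(Subalgebra.centralizer k (A : Set B)), (∀ i, cf i ∈ I) ∧
            b = ∑ i, ((e i : ↥A) : B) * ((cf i : B)) := span_rep k B A e π P1 P2 P3 P4 I
      apply SetLike.ext
      intro c
      rw [TwoSidedIdeal.mem_mk']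
      simp only [Set.mem_setOf_eq]
      rw [hrep]
      constructor
      · rintro ⟨cf, hcf, heq⟩
        -- apply π i0 to both sides of heq
        have happ : ∀ j, e.coord j 1 • (c : B) = ((cf j : B)) := by
          intro j
          have h1 : π j (c : B) = e.coord j 1 • (c : B) := P5 j (c : B) c.2
          have h2 : π j (∑ i, ((e i : ↥A) : B) * ((cf i : B))) = ((cf j : B)) := by
            rw [map_sum]
            have hterm : ∀ i, π j (((e i : ↥A) : B) * ((cf i : B)))
                = e.coord j (e i) • ((cf i : B)) := by
              intro i
              rw [P4 j _ _ (cf i).2, P1, smul_mul_assoc, one_mul]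
            rw [Finset.sum_congr rfl fun i _ => hterm i]
            have : ∀ i, e.coord j (e i) • ((cf i : B))
                = (if i = j then (1:k) else 0) • ((cf i : B)) := by
              intro i
              congr 1
              rw [Module.Basis.coord_apply, Module.Basis.repr_self, Finsupp.single_apply]
            rw [Finset.sum_congr rfl fun i _ => this i]
            simp
          rw [← h1, heq, h2]
        have := happ i0
        have hrepr1 : e.repr (1 : ↥A) = Finsupp.single i0 1 := by
          have h := e.repr_self i0
          rwa [hi0] at h
        have hcoord : e.coord i0 (1 : ↥A) = 1 := by
          rw [Module.Basis.coord_apply, hrepr1, Finsupp.single_eq_same]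
        rw [hcoord, one_smul] at this
        have hcc : c = cf i0 := Subtype.ext this
        rw [hcc]
        exact hcf i0
      · intro hc
        refine ⟨fun i => e.coord i 1 • c, fun i => ?_, ?_⟩
        · show e.coord i 1 • c ∈ I
          rw [Algebra.smul_def]
          exact I.mul_mem_left _ _ hc
        · have : ∑ i, ((e i : ↥A) : B) * (((e.coord i 1 • c : ↥(Subalgebra.centralizer k (A : Set B))) : B))
              = ∑ i, ((e.coord i 1 • e i : ↥A) : B) * (c : B) := by
            refine Finset.sum_congr rfl fun i _ => ?_
            push_cast
            rw [smul_mul_assoc, mul_smul_comm]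
          rw [this, ← Finset.sum_mul, ← AddSubmonoidClass.coe_finset_sum]
          have hsum : (∑ i, e.coord i 1 • e i : ↥A) = 1 := by
            simpa [Module.Basis.coord_apply] using e.sum_repr 1
          rw [hsum, OneMemClass.coe_one, one_mul]
    · -- right inverse
      intro J
      have hrep : ∀ b : B,
          b ∈ TwoSidedIdeal.span {b : B | ∃ a ∈ A, ∃ c ∈ TwoSidedIdeal.mk'
              {c : ↥(Subalgebra.centralizer k (A : Set B)) | (c : B) ∈ J}
              (by simpa using J.zero_mem)
              (fun {x y} hx hy => by simpa using J.add_mem hx hy)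
              (fun {x} hx => by simpa using J.neg_mem hx)
              (fun {x y} hy => by simpa using J.mul_mem_left _ _ hy)
              (fun {x y} hx => by simpa using J.mul_mem_right _ _ hx),
              b = a * ((c : Subalgebra.centralizer k (A : Set B)) : B)} ↔
          ∃ cf : _ → ↥(Subalgebra.centralizer k (A : Set B)),
            (∀ i, cf i ∈ TwoSidedIdeal.mk'
              {c : ↥(Subalgebra.centralizer k (A : Set B)) | (c : B) ∈ J}
              (by simpa using J.zero_mem)
              (fun {x y} hx hy => by simpa using J.add_mem hx hy)
              (fun {x} hx => by simpa using J.neg_mem hx)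
              (fun {x y} hy => by simpa using J.mul_mem_left _ _ hy)
              (fun {x y} hx => by simpa using J.mul_mem_right _ _ hx)) ∧
            b = ∑ i, ((e i : ↥A) : B) * ((cf i : B)) := span_rep k B A e π P1 P2 P3 P4 _
      apply SetLike.ext
      intro b
      rw [hrep]
      constructor
      · rintro ⟨cf, hcf, rfl⟩
        refine sum_mem fun i _ => J.mul_mem_left _ _ ?_
        have := hcf i
        rwa [TwoSidedIdeal.mem_mk'] at this
      · intro hb
        refine ⟨fun i => ⟨π i b, P2 i b⟩, fun i => ?_, ?_⟩
        · rw [TwoSidedIdeal.mem_mk']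
          exact P6 i J b hb
        · exact (P3 b).symm
  · -- part (iii)
    apply le_antisymm
    · rintro _ ⟨y, hy, rfl⟩
      rw [Subalgebra.mem_center_iff]
      intro b
      conv_lhs => rw [← P3 b]
      conv_rhs => rw [← P3 b]
      rw [Finset.sum_mul, Finset.mul_sum]
      refine Finset.sum_congr rfl fun i _ => ?_
      have h1 : (π i b) * ((y : ↥(Subalgebra.centralizer k (A : Set B))) : B)
          = ((y : ↥(Subalgebra.centralizer k (A : Set B))) : B) * π i b := by
        have := Subalgebra.mem_center_iff.mp hy ⟨π i b, P2 i b⟩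
        exact congrArg Subtype.val this
      have h2 : ((e i : ↥A) : B) * ((y : ↥(Subalgebra.centralizer k (A : Set B))) : B)
          = ((y : ↥(Subalgebra.centralizer k (A : Set B))) : B) * ((e i : ↥A) : B) :=
        (Subalgebra.mem_centralizer_iff k).mp y.2 _ (e i).2
      exact Commute.mul_left h2 h1
    · intro z hz
      have hzc : z ∈ Subalgebra.centralizer k (A : Set B) := by
        rw [Subalgebra.mem_centralizer_iff]
        intro g _
        exact Subalgebra.mem_center_iff.mp hz g
      exact ⟨⟨z, hzc⟩, Subalgebra.mem_center_iff.mpr fun c =>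
        Subtype.ext (Subalgebra.mem_center_iff.mp hz (c : B)), rfl⟩
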